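/- Assume the Lindemann–Weierstrass theorem: for distinct algebraic numbers u₁,…,u_r, the exponentials e^{u₁},…,e^{u_r} are linearly independent over the algebraic numbers. Let x > 0 and μ̂ with 0 < μ̂ ≤ x satisfy (x − μ̂)·e^{μ̂²} − x + μ̂·e^{−μ̂(2x−μ̂)} = 0 and μ̂ ≠ x. Then x and μ̂ cannot both be algebraic over ℚ; in particular if x ∈ ℚ then μ̂ is transcendental. -/
import Mathlib


open Real

/-- Lindemann–Weierstrass: exponentials of distinct algebraic numbers are linearly
independent over the algebraic numbers. -/
def LindemannWeierstrass : Prop :=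
  ∀ (r : ℕ) (u c : Fin r → ℝ), Function.Injective u →
    (∀ i, IsAlgebraic ℚ (u i)) → (∀ i, IsAlgebraic ℚ (c i)) →
    (∑ i, c i * Real.exp (u i)) = 0 → ∀ i, c i = 0

/-- If 0 < μ̂ ≤ x, μ̂ ≤ x, and μ̂ satisfies the critical equation, then x and μ̂ are
not both algebraic over ℚ; in particular, if x is rational then μ̂ is transcendental. -/
theorem mle_transcendental (LW : LindemannWeierstrass) (x μh : ℝ) (hx : 0 < x)
    (hμ : 0 < μh ∧ μh ≤ x) (hne : μh ≠ x)
    (heq : (x - μh) * Real.exp (μh ^ 2) - x + μh * Real.exp (-μh * (2 * x - μh)) = 0) :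
    ¬(IsAlgebraic ℚ x ∧ IsAlgebraic ℚ μh) ∧
      ((∃ q : ℚ, (q : ℝ) = x) → Transcendental ℚ μh) := by
  obtain ⟨hμ0, hμx⟩ := hμ
  have key : ¬(IsAlgebraic ℚ x ∧ IsAlgebraic ℚ μh) := by
    rintro ⟨hax, haμ⟩
    set u : Fin 3 → ℝ := ![μh ^ 2, 0, -μh * (2 * x - μh)] with hu
    set c : Fin 3 → ℝ := ![x - μh, -x, μh] with hc
    have hpos : 0 < μh ^ 2 := by positivity
    have hneg : -μh * (2 * x - μh) < 0 := by nlinarith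
    rw [isAlgebraic_iff_isIntegral] at hax haμ
    have hinj : Function.Injective u := by
      intro i j hij
      fin_cases i <;> fin_cases j <;>
        first
        | rfl
        | (exfalso; simp [hu] at hij;
           first
           | nlinarith
           | (rcases hij with h | h <;> nlinarith))
    have h2x : IsIntegral ℚ (2 * x - μh) := by
      rw [two_mul]; exact (hax.add hax).sub haμ
    have hua : ∀ i, IsAlgebraic ℚ (u i) := by
      intro i
      fin_cases i <;>
        simp only [hu, Matrix.cons_val_zero, Matrix.cons_val_one, Matrix.head_cons,
          Matrix.cons_val_two, Matrix.tail_cons]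
      · exact isAlgebraic_iff_isIntegral.mpr (by rw [sq]; exact haμ.mul haμ)
      · exact isAlgebraic_zero
      · exact isAlgebraic_iff_isIntegral.mpr (by rw [neg_mul]; exact (haμ.mul h2x).neg)
    have hca : ∀ i, IsAlgebraic ℚ (c i) := by
      intro i
      fin_cases i <;>
        simp only [hc, Matrix.cons_val_zero, Matrix.cons_val_one, Matrix.head_cons,
          Matrix.cons_val_two, Matrix.tail_cons]
      · exact isAlgebraic_iff_isIntegral.mpr (hax.sub haμ)
      · exact isAlgebraic_iff_isIntegral.mpr hax.neg
      · exact isAlgebraic_iff_isIntegral.mpr haμ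
    have hsum : (∑ i, c i * Real.exp (u i)) = 0 := by
      rw [neg_mul] at heq
      simp [hu, hc, Fin.sum_univ_three, Real.exp_zero]
      linarith
    have := LW 3 u c hinj hua hca hsum 1
    simp [hc] at this
    linarith
  refine ⟨key, ?_⟩
  rintro ⟨q, rfl⟩ haμ
  exact key ⟨by simpa using isAlgebraic_algebraMap (R := ℚ) (A := ℝ) q, haμ⟩
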